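/- If ξ and η are Schwartz functions on ℝ, then the short-time Fourier transform V_η ξ is a Schwartz function on ℝ². -/

import Mathlib

open Real Complex MeasureTheory SchwartzMap Finset
open scoped FourierTransform ComplexConjugate

noncomputable def conjSchwartz (f : SchwartzMap ℝ ℂ) : SchwartzMap ℝ ℂ where
  toFun := fun x => conj (f x)
  smooth' := Complex.conjCLE.toContinuousLinearMap.contDiff.comp f.smooth'
  decay' := by
    intro k n
    obtain ⟨C, hC⟩ := f.decay' k n
    refine ⟨C, fun x => ?_⟩
    have h : ‖iteratedFDeriv ℝ n (fun x => (conj (f x) : ℂ)) x‖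
        = ‖iteratedFDeriv ℝ n f x‖ := by
      have := Complex.conjLIE.norm_iteratedFDeriv_comp_left (⇑f) x n
      simpa [Function.comp_def, Complex.conjLIE_apply] using this
    rw [h]; exact hC x

@[simp] lemma conjSchwartz_apply (f : SchwartzMap ℝ ℂ) (x : ℝ) :
    conjSchwartz f x = conj (f x) := rfl

noncomputable def tensorSchwartz (f g : SchwartzMap ℝ ℂ) : SchwartzMap (ℝ × ℝ) ℂ where
  toFun := fun p => f p.1 * g p.2
  smooth' := ((f.smooth ⊤).comp contDiff_fst).mul ((g.smooth ⊤).comp contDiff_snd)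
  decay' := by
    intro k n
    set Sf := 2 ^ k * ((Finset.Iic (k, n)).sup (schwartzSeminormFamily ℝ ℝ ℂ)) f with hSf
    set Sg := 2 ^ k * ((Finset.Iic (k, n)).sup (schwartzSeminormFamily ℝ ℝ ℂ)) g with hSg
    refine ⟨(∑ i ∈ Finset.range (n + 1), (n.choose i : ℝ)) * (Sf * Sg), fun p => ?_⟩
    have hf1 : ContDiff ℝ (⊤ : ℕ∞) (fun q : ℝ × ℝ => f q.1) := (f.smooth ⊤).comp contDiff_fst
    have hg1 : ContDiff ℝ (⊤ : ℕ∞) (fun q : ℝ × ℝ => g q.2) := (g.smooth ⊤).comp contDiff_snd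
    have hmul := norm_iteratedFDeriv_mul_le (𝕜 := ℝ) hf1 hg1 p (n := n) (by exact_mod_cast le_top)
    -- bound on each factor
    have hFf : ∀ i, ‖iteratedFDeriv ℝ i (fun q : ℝ × ℝ => f q.1) p‖
        ≤ ‖iteratedFDeriv ℝ i (⇑f) p.1‖ := by
      intro i
      have heq := (ContinuousLinearMap.fst ℝ ℝ ℝ).iteratedFDeriv_comp_right
        (f := ⇑f) (f.smooth ⊤) p (i := i) (by exact_mod_cast le_top)
      have : (fun q : ℝ × ℝ => f q.1) = (⇑f) ∘ (ContinuousLinearMap.fst ℝ ℝ ℝ) := rfl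
      rw [this, heq]
      refine le_trans (ContinuousMultilinearMap.norm_compContinuousLinearMap_le _ _) ?_
      exact mul_le_of_le_one_right (norm_nonneg _)
        (Finset.prod_le_one (fun _ _ => norm_nonneg _)
          (fun j _ => ContinuousLinearMap.norm_fst_le ℝ ℝ ℝ))
    have hGg : ∀ i, ‖iteratedFDeriv ℝ i (fun q : ℝ × ℝ => g q.2) p‖
        ≤ ‖iteratedFDeriv ℝ i (⇑g) p.2‖ := by
      intro i
      have heq := (ContinuousLinearMap.snd ℝ ℝ ℝ).iteratedFDeriv_comp_right
        (f := ⇑g) (g.smooth ⊤) p (i := i) (by exact_mod_cast le_top)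
      have : (fun q : ℝ × ℝ => g q.2) = (⇑g) ∘ (ContinuousLinearMap.snd ℝ ℝ ℝ) := rfl
      rw [this, heq]
      refine le_trans (ContinuousMultilinearMap.norm_compContinuousLinearMap_le _ _) ?_
      exact mul_le_of_le_one_right (norm_nonneg _)
        (Finset.prod_le_one (fun _ _ => norm_nonneg _)
          (fun j _ => ContinuousLinearMap.norm_snd_le ℝ ℝ ℝ))
    have hpnorm : ‖p‖ ≤ (1 + ‖p.1‖) * (1 + ‖p.2‖) := by
      have hmax : ‖p‖ = max ‖p.1‖ ‖p.2‖ := rfl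
      rw [hmax]
      have h1 : ‖p.1‖ ≤ (1 + ‖p.1‖) * (1 + ‖p.2‖) := by
        nlinarith [norm_nonneg p.1, norm_nonneg p.2]
      have h2 : ‖p.2‖ ≤ (1 + ‖p.1‖) * (1 + ‖p.2‖) := by
        nlinarith [norm_nonneg p.1, norm_nonneg p.2]
      exact max_le h1 h2
    calc ‖p‖ ^ k * ‖iteratedFDeriv ℝ n (fun p : ℝ × ℝ => f p.1 * g p.2) p‖
        ≤ ((1 + ‖p.1‖) ^ k * (1 + ‖p.2‖) ^ k) * ∑ i ∈ Finset.range (n + 1),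
            (n.choose i : ℝ) * ‖iteratedFDeriv ℝ i (⇑f) p.1‖ *
              ‖iteratedFDeriv ℝ (n - i) (⇑g) p.2‖ := by
          have hk : ‖p‖ ^ k ≤ (1 + ‖p.1‖) ^ k * (1 + ‖p.2‖) ^ k := by
            rw [← mul_pow]; exact pow_le_pow_left₀ (norm_nonneg p) hpnorm k
          refine mul_le_mul hk ?_ (norm_nonneg _) (by positivity)
          refine hmul.trans (Finset.sum_le_sum fun i hi => ?_)
          have := hFf i
          have := hGg (n - i)
          gcongr
      _ = ∑ i ∈ Finset.range (n + 1), (n.choose i : ℝ) *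
            ((1 + ‖p.1‖) ^ k * ‖iteratedFDeriv ℝ i (⇑f) p.1‖) *
            ((1 + ‖p.2‖) ^ k * ‖iteratedFDeriv ℝ (n - i) (⇑g) p.2‖) := by
          rw [Finset.mul_sum]
          exact Finset.sum_congr rfl fun i _ => by ring
      _ ≤ ∑ i ∈ Finset.range (n + 1), (n.choose i : ℝ) * Sf * Sg := by
          refine Finset.sum_le_sum fun i hi => ?_
          have hif : (1 + ‖p.1‖) ^ k * ‖iteratedFDeriv ℝ i (⇑f) p.1‖ ≤ Sf := by
            exact one_add_le_sup_seminorm_apply (𝕜 := ℝ) (m := (k, n)) le_rfl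
              (Nat.lt_succ_iff.mp (Finset.mem_range.mp hi)) f p.1
          have hig : (1 + ‖p.2‖) ^ k * ‖iteratedFDeriv ℝ (n - i) (⇑g) p.2‖ ≤ Sg := by
            exact one_add_le_sup_seminorm_apply (𝕜 := ℝ) (m := (k, n)) le_rfl
              (Nat.sub_le n i) g p.2
          have h1 : (0:ℝ) ≤ (n.choose i : ℝ) := Nat.cast_nonneg _
          have h2 : (0:ℝ) ≤ (1 + ‖p.1‖) ^ k * ‖iteratedFDeriv ℝ i (⇑f) p.1‖ := by positivity
          have h3 : (0:ℝ) ≤ (1 + ‖p.2‖) ^ k * ‖iteratedFDeriv ℝ (n - i) (⇑g) p.2‖ := by positivity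
          have hSf0 : (0:ℝ) ≤ Sf := le_trans h2 hif
          calc (n.choose i : ℝ) * ((1 + ‖p.1‖) ^ k * ‖iteratedFDeriv ℝ i (⇑f) p.1‖) *
                ((1 + ‖p.2‖) ^ k * ‖iteratedFDeriv ℝ (n - i) (⇑g) p.2‖)
              ≤ (n.choose i : ℝ) * Sf * ((1 + ‖p.2‖) ^ k *
                  ‖iteratedFDeriv ℝ (n - i) (⇑g) p.2‖) :=
                mul_le_mul_of_nonneg_right (mul_le_mul_of_nonneg_left hif h1) h3
            _ ≤ (n.choose i : ℝ) * Sf * Sg :=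
                mul_le_mul_of_nonneg_left hig (by positivity)
      _ = (∑ i ∈ Finset.range (n + 1), (n.choose i : ℝ)) * (Sf * Sg) := by
          rw [← Finset.sum_mul, ← Finset.sum_mul, mul_assoc]

@[simp] lemma tensorSchwartz_apply (f g : SchwartzMap ℝ ℂ) (p : ℝ × ℝ) :
    tensorSchwartz f g p = f p.1 * g p.2 := rfl

lemma iteratedDeriv_char (i : ℕ) :
    iteratedDeriv i (fun x : ℝ => (Real.fourierChar x : ℂ))
      = fun t => (2 * π * Complex.I) ^ i * (Real.fourierChar t : ℂ) := by
  induction i with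
  | zero => funext t; simp
  | succ n ih =>
      funext t
      rw [iteratedDeriv_succ, ih]
      have h1 : HasDerivAt (fun s : ℝ => (2 * π * Complex.I) ^ n * (Real.fourierChar s : ℂ))
          ((2 * π * Complex.I) ^ n * (2 * π * Complex.I * (Real.fourierChar t : ℂ))) t :=
        (Real.hasDerivAt_fourierChar t).const_mul _
      rw [h1.deriv]; ring

lemma norm_iteratedFDeriv_char (i : ℕ) (t : ℝ) :
    ‖iteratedFDeriv ℝ i (fun x : ℝ => (Real.fourierChar x : ℂ)) t‖ = (2 * π) ^ i := by
  rw [norm_iteratedFDeriv_eq_norm_iteratedDeriv, iteratedDeriv_char]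
  have h1 : ‖(2 * (π : ℂ) * Complex.I)‖ = 2 * π := by
    simp [_root_.abs_of_nonneg Real.pi_pos.le]
  rw [norm_mul, norm_pow, h1]
  simp [Circle.norm_coe]

lemma contDiff_char : ContDiff ℝ (⊤ : ℕ∞) (fun x : ℝ => (Real.fourierChar x : ℂ)) := by
  have : (fun x : ℝ => (Real.fourierChar x : ℂ))
      = fun x : ℝ => Complex.exp ((2 * π * x : ℝ) * Complex.I) := by
    funext x; rw [Real.fourierChar_apply]
  rw [this]
  exact Complex.contDiff_exp.comp
    ((Complex.ofRealCLM.contDiff.comp (contDiff_const.mul contDiff_id)).mul contDiff_const)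

lemma norm_iteratedFDeriv_mulQ (i : ℕ) (p : ℝ × ℝ) :
    ‖iteratedFDeriv ℝ i (fun q : ℝ × ℝ => q.1 * q.2) p‖ ≤ 2 ^ i * (1 + ‖p‖) ^ (2 - i) := by
  classical
  set M := ContinuousMultilinearMap.mkPiAlgebra ℝ (Fin 2) ℝ with hM
  set A := ((ContinuousLinearEquiv.finTwoArrow ℝ ℝ).symm).toContinuousLinearMap with hA
  have hQ : (fun q : ℝ × ℝ => q.1 * q.2) = (⇑M) ∘ (⇑A) := by
    funext q
    simp [hM, hA, ContinuousMultilinearMap.mkPiAlgebra_apply, Fin.prod_univ_two,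
      ContinuousLinearEquiv.finTwoArrow, LinearEquiv.finTwoArrow, finTwoArrowEquiv,
      Matrix.cons_val_zero, Matrix.cons_val_one]
    rfl
  have hAp : ∀ q : ℝ × ℝ, ‖A q‖ ≤ ‖q‖ := by
    intro q
    rw [pi_norm_le_iff_of_nonneg (norm_nonneg q)]
    intro j
    fin_cases j
    · exact norm_fst_le q
    · exact norm_snd_le q
  have hAnorm : ‖A‖ ≤ 1 := by
    refine ContinuousLinearMap.opNorm_le_bound _ zero_le_one fun q => ?_
    simpa using hAp q
  rw [hQ]
  rw [A.iteratedFDeriv_comp_right (M.contDiff (n := (⊤ : ℕ∞))) p (i := i)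
    (by exact_mod_cast le_top)]
  refine le_trans (ContinuousMultilinearMap.norm_compContinuousLinearMap_le _ _) ?_
  have h1 : ‖iteratedFDeriv ℝ i (⇑M) (A p)‖
      ≤ (Nat.descFactorial 2 i : ℝ) * ‖M‖ * ‖A p‖ ^ (2 - i) := by
    simpa [Fintype.card_fin] using M.norm_iteratedFDeriv_le i (A p)
  have h2 : ∏ _j : Fin i, ‖A‖ ≤ 1 :=
    Finset.prod_le_one (fun _ _ => norm_nonneg _) (fun _ _ => hAnorm)
  have h3 : (0:ℝ) ≤ ‖iteratedFDeriv ℝ i (⇑M) (A p)‖ := norm_nonneg _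
  calc ‖iteratedFDeriv ℝ i (⇑M) (A p)‖ * ∏ _j : Fin i, ‖A‖
      ≤ ‖iteratedFDeriv ℝ i (⇑M) (A p)‖ * 1 := mul_le_of_le_one_right h3 h2 |>.trans_eq
        (mul_one _).symm
    _ = ‖iteratedFDeriv ℝ i (⇑M) (A p)‖ := mul_one _
    _ ≤ (Nat.descFactorial 2 i : ℝ) * ‖M‖ * ‖A p‖ ^ (2 - i) := h1
    _ ≤ 2 ^ i * 1 * (1 + ‖p‖) ^ (2 - i) := by
        gcongr
        · exact_mod_cast Nat.descFactorial_le_pow 2 i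
        · exact ContinuousMultilinearMap.norm_mkPiAlgebra_le
        · exact (hAp p).trans (by linarith [norm_nonneg p])
    _ = 2 ^ i * (1 + ‖p‖) ^ (2 - i) := by ring

lemma hasTemperateGrowth_char :
    Function.HasTemperateGrowth (fun p : ℝ × ℝ => (Real.fourierChar (p.1 * p.2) : ℂ)) := by
  have hQc : ContDiff ℝ (⊤ : ℕ∞) (fun q : ℝ × ℝ => q.1 * q.2) := contDiff_fst.mul contDiff_snd
  have hcomp : (fun p : ℝ × ℝ => (Real.fourierChar (p.1 * p.2) : ℂ))
      = (fun x : ℝ => (Real.fourierChar x : ℂ)) ∘ (fun q : ℝ × ℝ => q.1 * q.2) := rfl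
  constructor
  · rw [hcomp]; exact contDiff_char.comp hQc
  · intro n
    refine ⟨n, (n.factorial : ℝ) * (2 * π) ^ n * 2 ^ n, fun p => ?_⟩
    have hC : ∀ i, i ≤ n →
        ‖iteratedFDeriv ℝ i (fun x : ℝ => (Real.fourierChar x : ℂ)) (p.1 * p.2)‖
          ≤ (2 * π) ^ n := by
      intro i hi
      rw [norm_iteratedFDeriv_char]
      apply pow_le_pow_right₀ (by nlinarith [Real.pi_gt_three]) hi
    have hD : ∀ i, 1 ≤ i → i ≤ n →
        ‖iteratedFDeriv ℝ i (fun q : ℝ × ℝ => q.1 * q.2) p‖ ≤ (2 * (1 + ‖p‖)) ^ i := by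
      intro i h1i hin
      refine (norm_iteratedFDeriv_mulQ i p).trans ?_
      rw [mul_pow]
      refine mul_le_mul_of_nonneg_left ?_ (by positivity)
      exact pow_le_pow_right₀ (by linarith [norm_nonneg p]) (by omega)
    have := norm_iteratedFDeriv_comp_le (𝕜 := ℝ) (n := n) contDiff_char hQc
      (by exact_mod_cast le_top) p hC hD
    rw [← hcomp] at this
    refine this.trans (le_of_eq ?_)
    rw [mul_pow 2 (1 + ‖p‖), mul_pow 2 π]
    ring

noncomputable def stft (η ξ : ℝ → ℂ) (z : ℝ × ℝ) : ℂ :=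
  ∫ t : ℝ, ξ t * (starRingEnd ℂ) (η (t - z.1)) *
    Complex.exp (-(2 * (Real.pi : ℂ) * Complex.I * (t : ℂ) * (z.2 : ℂ)))

noncomputable def e2 : EuclideanSpace ℝ (Fin 2) ≃L[ℝ] ℝ × ℝ :=
  (EuclideanSpace.equiv (Fin 2) ℝ).trans (ContinuousLinearEquiv.finTwoArrow ℝ ℝ)

noncomputable def φ2 : EuclideanSpace ℝ (Fin 2) ≃ᵐ ℝ × ℝ :=
  (MeasurableEquiv.toLp 2 (Fin 2 → ℝ)).symm.trans MeasurableEquiv.finTwoArrow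

lemma φ2_measurePreserving : MeasurePreserving φ2 volume volume := by
  have h := (volume_preserving_finTwoArrow ℝ).comp
    (EuclideanSpace.volume_preserving_symm_measurableEquiv_toLp (Fin 2))
  exact h

lemma e2_φ2_symm (p : ℝ × ℝ) : e2 (φ2.symm p) = p := rfl

lemma inner_φ2_symm (p z : ℝ × ℝ) :
    (inner ℝ (φ2.symm p) (e2.symm z) : ℝ) = p.1 * z.1 + p.2 * z.2 := by
  simp [PiLp.inner_apply, Fin.sum_univ_two]
  change z.1 * p.1 + z.2 * p.2 = _; ring

theorem stft_schwartz (ξ η : SchwartzMap ℝ ℂ) :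
    ∃ F : SchwartzMap (ℝ × ℝ) ℂ, ∀ z : ℝ × ℝ, F z = stft (fun t => η t) (fun t => ξ t) z := by
  classical
  set F1 : SchwartzMap ℝ ℂ := fourierTransformCLM ℝ (conjSchwartz η) with hF1
  set g2 : SchwartzMap (ℝ × ℝ) ℂ :=
    bilinLeftCLM (ContinuousLinearMap.mul ℝ ℂ) hasTemperateGrowth_char
      (tensorSchwartz F1 ξ) with hg2def
  have hg2 : ∀ p : ℝ × ℝ, g2 p = F1 p.1 * ξ p.2 * (Real.fourierChar (p.1 * p.2) : ℂ) := by
    intro p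
    have h : g2 p = (tensorSchwartz F1 ξ) p * (Real.fourierChar (p.1 * p.2) : ℂ) := rfl
    rw [h, tensorSchwartz_apply]
  set g' : SchwartzMap (EuclideanSpace ℝ (Fin 2)) ℂ :=
    compCLMOfContinuousLinearEquiv ℝ e2 g2 with hg'def
  set Fbig : SchwartzMap (ℝ × ℝ) ℂ :=
    compCLMOfContinuousLinearEquiv ℝ e2.symm (fourierTransformCLM ℝ g') with hFdef
  refine ⟨Fbig, fun z => ?_⟩
  have h0 : Fbig z = 𝓕 (⇑g') (e2.symm z) := rfl
  rw [h0, Real.fourier_eq]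
  -- change of variables to ℝ × ℝ
  have hcv : ∫ v : EuclideanSpace ℝ (Fin 2), (Real.fourierChar (-(inner ℝ v (e2.symm z) : ℝ))) • g' v
      = ∫ p : ℝ × ℝ, (Real.fourierChar (-(p.1 * z.1 + p.2 * z.2)) : Circle) • g2 p := by
    rw [← MeasurePreserving.integral_comp (φ2_measurePreserving.symm)
      (φ2.symm.measurableEmbedding)
      (fun v : EuclideanSpace ℝ (Fin 2) => (Real.fourierChar (-(inner ℝ v (e2.symm z) : ℝ))) • g' v)]
    congr 1
    funext p
    rw [inner_φ2_symm]
    rfl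
  rw [hcv]
  -- integrability of the integrand on ℝ × ℝ
  have hsmul : (fun p : ℝ × ℝ => (Real.fourierChar (-(p.1 * z.1 + p.2 * z.2)) : Circle) • g2 p)
      = fun p : ℝ × ℝ => ((Real.fourierChar (-(p.1 * z.1 + p.2 * z.2)) : ℂ)) * g2 p := by
    funext p; simp [Circle.smul_def, smul_eq_mul]
  have hcont : Continuous fun p : ℝ × ℝ =>
      ((Real.fourierChar (-(p.1 * z.1 + p.2 * z.2)) : ℂ)) := by
    apply continuous_subtype_val.comp
    exact Real.continuous_fourierChar.comp
      (((continuous_fst.mul continuous_const).add (continuous_snd.mul continuous_const)).neg)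
  have hInt : Integrable (fun p : ℝ × ℝ =>
      (Real.fourierChar (-(p.1 * z.1 + p.2 * z.2)) : Circle) • g2 p) volume := by
    rw [hsmul]
    exact g2.integrable.bdd_mul (c := 1) hcont.aestronglyMeasurable (Filter.Eventually.of_forall fun p => by simp [Circle.norm_coe])
  rw [Measure.volume_eq_prod] at hInt ⊢
  rw [integral_prod_symm _ hInt]
  -- inner integral computation
  have hinner : ∀ b : ℝ, (∫ a : ℝ, (Real.fourierChar (-(a * z.1 + b * z.2)) : Circle) • g2 (a, b))
      = ξ b * conj (η (b - z.1)) *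
          Complex.exp (-(2 * (π : ℂ) * Complex.I * (b : ℂ) * (z.2 : ℂ))) := by
    intro b
    have hpt : ∀ a : ℝ, (Real.fourierChar (-(a * z.1 + b * z.2)) : Circle) • g2 (a, b)
        = (ξ b * Complex.exp (-(2 * (π : ℂ) * Complex.I * (b : ℂ) * (z.2 : ℂ)))) *
          ((Real.fourierChar (-(a * (z.1 - b))) : Circle) • F1 a) := by
      intro a
      rw [hg2 (a, b)]
      have hexp : ((Real.fourierChar (-(a * z.1 + b * z.2)) : Circle) : ℂ) *
            ((Real.fourierChar (a * b) : Circle) : ℂ)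
          = Complex.exp (-(2 * (π : ℂ) * Complex.I * (b : ℂ) * (z.2 : ℂ))) *
            ((Real.fourierChar (-(a * (z.1 - b))) : Circle) : ℂ) := by
        rw [Real.fourierChar_apply, Real.fourierChar_apply, Real.fourierChar_apply,
          ← Complex.exp_add, ← Complex.exp_add]
        congr 1
        push_cast
        ring
      simp only [Circle.smul_def, smul_eq_mul]
      linear_combination (F1 a * (ξ b : ℂ)) * hexp
    calc (∫ a : ℝ, (Real.fourierChar (-(a * z.1 + b * z.2)) : Circle) • g2 (a, b))
        = ∫ a : ℝ, (ξ b * Complex.exp (-(2 * (π : ℂ) * Complex.I * (b : ℂ) * (z.2 : ℂ)))) *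
            ((Real.fourierChar (-(a * (z.1 - b))) : Circle) • F1 a) := by
          simp_rw [hpt]
      _ = (ξ b * Complex.exp (-(2 * (π : ℂ) * Complex.I * (b : ℂ) * (z.2 : ℂ)))) *
            ∫ a : ℝ, (Real.fourierChar (-(a * (z.1 - b))) : Circle) • F1 a :=
          integral_const_mul _ _
      _ = (ξ b * Complex.exp (-(2 * (π : ℂ) * Complex.I * (b : ℂ) * (z.2 : ℂ)))) *
            𝓕 (⇑F1) (z.1 - b) := by rw [← Real.fourier_real_eq]
      _ = ξ b * conj (η (b - z.1)) *
            Complex.exp (-(2 * (π : ℂ) * Complex.I * (b : ℂ) * (z.2 : ℂ))) := by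
          have h1 : ⇑F1 = 𝓕 (⇑(conjSchwartz η)) := rfl
          have h2 : 𝓕⁻ (𝓕 (⇑(conjSchwartz η))) = ⇑(conjSchwartz η) :=
            Continuous.fourierInv_fourier_eq (conjSchwartz η).continuous
              (conjSchwartz η).integrable F1.integrable
          have h3 : 𝓕 (⇑F1) (z.1 - b) = conj (η (b - z.1)) := by
            rw [h1]
            have h4 : 𝓕 (𝓕 (⇑(conjSchwartz η))) (z.1 - b)
                = 𝓕⁻ (𝓕 (⇑(conjSchwartz η))) (-(z.1 - b)) := by
              rw [Real.fourierInv_eq_fourier_neg, neg_neg]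
            rw [h4, h2, conjSchwartz_apply, neg_sub]
          rw [h3]
          ring
  simp_rw [hinner]
  rfl
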